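/- arXiv:2506.23410 — 2 statements merged into one kernel-verified Lean document; each statement's English description precedes it below -/
import Mathlib

section
/- Let Ω be a Hermitian positive definite n×n matrix with Cholesky decomposition Ω = L L^H, let X be an n×m complex matrix, and σ > 0. Then X (X^H Ω X + σ² I_m)^{-1} X^H = Ω^{-1} − σ² Ω^{-1} (X X^H + σ² Ω^{-1})^{-1} Ω^{-1}. -/
open Matrix
open scoped ComplexOrder

lemma posDef_smul_aux {k : ℕ} {M : Matrix (Fin k) (Fin k) ℂ} (hM : M.PosDef)
    {c : ℂ} (hc : 0 < c) : (c • M).PosDef := by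
  have hcs : star c = c := by
    rw [Complex.star_def, Complex.conj_eq_iff_im]
    exact (Complex.lt_def.1 hc).2.symm
  refine ⟨?_, fun x hx => ?_⟩
  · rw [IsHermitian, conjTranspose_smul, hM.1.eq, hcs]
  · convert smul_pos hc (hM.2 hx) using 1
    simp only [Finsupp.mul_sum, Matrix.smul_apply, smul_eq_mul, mul_comm, mul_left_comm, mul_assoc]

theorem stmt1 {n m : ℕ} (Ω : Matrix (Fin n) (Fin n) ℂ) (hΩ : Ω.PosDef)
    (L : Matrix (Fin n) (Fin n) ℂ) (hL : Ω = L * Lᴴ)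
    (X : Matrix (Fin n) (Fin m) ℂ) (σ : ℝ) (hσ : 0 < σ) :
    X * (Xᴴ * Ω * X + (σ ^ 2 : ℂ) • (1 : Matrix (Fin m) (Fin m) ℂ))⁻¹ * Xᴴ =
      Ω⁻¹ - (σ ^ 2 : ℂ) • (Ω⁻¹ * (X * Xᴴ + (σ ^ 2 : ℂ) • Ω⁻¹)⁻¹ * Ω⁻¹) := by
  set c : ℂ := (σ ^ 2 : ℂ) with hcdef
  have hc : 0 < c := pow_pos (Complex.zero_lt_real.mpr hσ) 2
  set A : Matrix (Fin m) (Fin m) ℂ := Xᴴ * Ω * X + c • 1 with hAdef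
  -- invertibility of A
  have hA : A.PosDef := by
    refine Matrix.PosDef.posSemidef_add
      (hΩ.posSemidef.conjTranspose_mul_mul_same X) ?_
    rw [smul_one_eq_diagonal]
    exact Matrix.PosDef.diagonal fun _ => hc
  have hAdet : IsUnit A.det := hA.det_pos.ne'.isUnit
  have hΩdet : IsUnit Ω.det := hΩ.det_pos.ne'.isUnit
  -- key cancellation: (XᴴΩX) A⁻¹ = 1 - c • A⁻¹
  have hXAX : (Xᴴ * Ω * X) * A⁻¹ = 1 - c • A⁻¹ := by
    have h1 : A * A⁻¹ = 1 := Matrix.mul_nonsing_inv _ hAdet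
    have h2 : Xᴴ * Ω * X = A - c • 1 := by rw [hAdef, add_sub_cancel_right]
    rw [h2, Matrix.sub_mul, h1, Matrix.smul_mul, Matrix.one_mul]
  have hXAX' : ∀ Z : Matrix (Fin m) (Fin n) ℂ,
      Xᴴ * (Ω * (X * (A⁻¹ * Z))) = Z - c • (A⁻¹ * Z) := by
    intro Z
    have := congrArg (· * Z) hXAX
    simpa [Matrix.mul_assoc, Matrix.sub_mul, Matrix.smul_mul] using this
  -- the Woodbury-type identity
  have key : (X * Xᴴ + c • Ω⁻¹) * (Ω - Ω * X * A⁻¹ * Xᴴ * Ω) = c • 1 := by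
    simp only [Matrix.add_mul, Matrix.mul_sub, Matrix.smul_mul, Matrix.mul_smul,
      Matrix.mul_assoc, hXAX', Matrix.nonsing_inv_mul_cancel_left _ _ hΩdet, Matrix.nonsing_inv_mul _ hΩdet]
    abel
  have hBdet : (X * Xᴴ + c • Ω⁻¹)⁻¹ = c⁻¹ • (Ω - Ω * X * A⁻¹ * Xᴴ * Ω) := by
    apply Matrix.inv_eq_right_inv
    rw [Matrix.mul_smul, key, smul_smul, inv_mul_cancel₀ hc.ne', one_smul]
  rw [hBdet]
  rw [Matrix.mul_smul, Matrix.smul_mul, smul_smul, mul_inv_cancel₀ hc.ne', one_smul]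
  have expand : Ω⁻¹ * (Ω - Ω * X * A⁻¹ * Xᴴ * Ω) * Ω⁻¹ = Ω⁻¹ - X * A⁻¹ * Xᴴ := by
    rw [Matrix.mul_sub, Matrix.sub_mul]
    rw [Matrix.nonsing_inv_mul _ hΩdet, Matrix.one_mul]
    congr 1
    calc Ω⁻¹ * (Ω * X * A⁻¹ * Xᴴ * Ω) * Ω⁻¹
        = Ω⁻¹ * (Ω * (X * A⁻¹ * Xᴴ * (Ω * Ω⁻¹))) := by
          simp only [Matrix.mul_assoc]
      _ = X * A⁻¹ * Xᴴ := by
          rw [Matrix.mul_nonsing_inv _ hΩdet, Matrix.mul_one,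
            Matrix.nonsing_inv_mul_cancel_left _ _ hΩdet]
  rw [expand]
  abel
end

section
/- Let E be an m×m Hermitian positive definite matrix and B an m×p complex matrix. The function f(B,E) = −Tr(B^H E^{-1} B) is jointly concave in (B,E) over the set of pairs with E ≻ 0. Consequently, for any fixed point (B₀,E₀) with E₀ ≻ 0, f(B,E) ≤ Tr(E₀^{-1} B₀ B₀^H E₀^{-1} E) − 2 Re Tr(B₀^H E₀^{-1} B) + Tr(B₀^H E₀^{-1} B₀) − Tr(E₀^{-1} B₀ B₀^H). -/
open Matrix
open scoped ComplexOrder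

lemma myTraceNonneg {n : ℕ} {M : Matrix (Fin n) (Fin n) ℂ} (hM : M.PosSemidef) :
    0 ≤ M.trace.re := by
  have h : ∀ i, 0 ≤ (M i i).re := by
    intro i
    have := hM.dotProduct_mulVec_nonneg (Pi.single i 1)
    have heq : dotProduct (star (Pi.single i 1)) (M *ᵥ (Pi.single i 1)) = M i i := by
      simp [dotProduct, mulVec, Pi.single_apply]
    rw [heq] at this
    exact (Complex.nonneg_iff.mp this).1
  rw [Matrix.trace]
  simpa [Matrix.diag] using Finset.sum_nonneg (fun i _ => h i)

lemma mySmulPSD {n : ℕ} {M : Matrix (Fin n) (Fin n) ℂ} (hM : M.PosSemidef) {c : ℝ}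
    (hc : 0 ≤ c) : ((c : ℂ) • M).PosSemidef := by
  refine PosSemidef.of_dotProduct_mulVec_nonneg ?_ (fun x => ?_)
  · show ((c : ℂ) • M)ᴴ = _
    rw [conjTranspose_smul, Complex.star_def, Complex.conj_ofReal, hM.1.eq]
  · rw [smul_mulVec, dotProduct_smul]
    exact smul_nonneg (by exact_mod_cast Complex.zero_le_real.mpr hc) (hM.dotProduct_mulVec_nonneg x)

lemma mySmulPD {n : ℕ} {M : Matrix (Fin n) (Fin n) ℂ} (hM : M.PosDef) {c : ℝ}
    (hc : 0 < c) : ((c : ℂ) • M).PosDef := by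
  refine PosDef.of_dotProduct_mulVec_pos ?_ (fun x hx => ?_)
  · show ((c : ℂ) • M)ᴴ = _
    rw [conjTranspose_smul, Complex.star_def, Complex.conj_ofReal, hM.1.eq]
  · rw [smul_mulVec, dotProduct_smul]
    exact smul_pos (by exact_mod_cast Complex.zero_lt_real.mpr hc) (hM.dotProduct_mulVec_pos hx)

lemma myConvexPD {n : ℕ} {A B : Matrix (Fin n) (Fin n) ℂ} (hA : A.PosDef) (hB : B.PosDef)
    {t : ℝ} (h0 : 0 ≤ t) (h1 : t ≤ 1) :
    (((t : ℂ)) • A + (((1 - t : ℝ)) : ℂ) • B).PosDef := by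
  rcases eq_or_lt_of_le h0 with h | h
  · simpa [← h] using hB
  · exact (mySmulPD hA h).add_posSemidef (mySmulPSD hB.posSemidef (by linarith))

lemma myKey {m p : ℕ} (B B₀ : Matrix (Fin m) (Fin p) ℂ) (E E₀ : Matrix (Fin m) (Fin m) ℂ)
    (hE : E.PosDef) (hE₀ : E₀.PosDef) :
    -((Bᴴ * E⁻¹ * B).trace.re) ≤
      (E₀⁻¹ * B₀ * B₀ᴴ * E₀⁻¹ * E).trace.re - 2 * (B₀ᴴ * E₀⁻¹ * B).trace.re := by
  have hdet : IsUnit E.det := hE.det_pos.ne'.isUnit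
  have hEinv : E⁻¹ᴴ = E⁻¹ := hE.isHermitian.inv
  have hE₀inv : E₀⁻¹ᴴ = E₀⁻¹ := hE₀.isHermitian.inv
  set X := E⁻¹ * B - E₀⁻¹ * B₀ with hXdef
  have hpsd := hE.posSemidef.conjTranspose_mul_mul_same X
  have htr := myTraceNonneg hpsd
  have hcancel : ∀ Y : Matrix (Fin m) (Fin p) ℂ, E⁻¹ * (E * Y) = Y := fun Y => by
    rw [← Matrix.mul_assoc, Matrix.nonsing_inv_mul _ hdet, Matrix.one_mul]
  have hcancel2 : ∀ Y : Matrix (Fin m) (Fin p) ℂ, E * (E⁻¹ * Y) = Y := fun Y => by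
    rw [← Matrix.mul_assoc, Matrix.mul_nonsing_inv _ hdet, Matrix.one_mul]
  have hX : Xᴴ * E * X =
      Bᴴ * (E⁻¹ * B) - Bᴴ * (E₀⁻¹ * B₀) - B₀ᴴ * (E₀⁻¹ * B)
        + B₀ᴴ * (E₀⁻¹ * (E * (E₀⁻¹ * B₀))) := by
    simp only [hXdef, conjTranspose_sub, conjTranspose_mul, hEinv, hE₀inv,
      Matrix.sub_mul, Matrix.mul_sub, Matrix.mul_assoc, hcancel, hcancel2]
    abel
  have h2 : (E₀⁻¹ * B₀ * B₀ᴴ * E₀⁻¹ * E).trace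
      = (B₀ᴴ * (E₀⁻¹ * (E * (E₀⁻¹ * B₀)))).trace := by
    rw [show E₀⁻¹ * B₀ * B₀ᴴ * E₀⁻¹ * E = (E₀⁻¹ * B₀) * (B₀ᴴ * E₀⁻¹ * E) from by
      simp only [Matrix.mul_assoc], Matrix.trace_mul_comm]
    congr 1
    simp only [Matrix.mul_assoc]
  have h3 : (Bᴴ * (E₀⁻¹ * B₀)).trace.re = (B₀ᴴ * E₀⁻¹ * B).trace.re := by
    have hconj : (B₀ᴴ * E₀⁻¹ * B)ᴴ = Bᴴ * (E₀⁻¹ * B₀) := by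
      simp [conjTranspose_mul, hE₀inv, Matrix.mul_assoc]
    rw [← hconj, Matrix.trace_conjTranspose]
    exact Complex.conj_re _
  rw [hX] at htr
  simp only [Matrix.trace_add, Matrix.trace_sub, Complex.add_re, Complex.sub_re] at htr
  have hrw : (Bᴴ * E⁻¹ * B).trace = (Bᴴ * (E⁻¹ * B)).trace := by
    rw [Matrix.mul_assoc]
  have h4 : (B₀ᴴ * (E₀⁻¹ * B)).trace.re = (B₀ᴴ * E₀⁻¹ * B).trace.re := by
    rw [Matrix.mul_assoc]
  rw [hrw, h2]
  linarith [htr, h3, h4]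

theorem stmt3 {m p : ℕ} :
    (∀ (B₁ B₂ : Matrix (Fin m) (Fin p) ℂ) (E₁ E₂ : Matrix (Fin m) (Fin m) ℂ),
      E₁.PosDef → E₂.PosDef → ∀ t : ℝ, 0 ≤ t → t ≤ 1 →
      t * (-(B₁ᴴ * E₁⁻¹ * B₁).trace.re) + (1 - t) * (-(B₂ᴴ * E₂⁻¹ * B₂).trace.re) ≤
        -((((t : ℂ) • B₁ + ((1 - t : ℝ) : ℂ) • B₂)ᴴ *
            ((t : ℂ) • E₁ + ((1 - t : ℝ) : ℂ) • E₂)⁻¹ *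
            ((t : ℂ) • B₁ + ((1 - t : ℝ) : ℂ) • B₂)).trace.re)) ∧
    (∀ (B B₀ : Matrix (Fin m) (Fin p) ℂ) (E E₀ : Matrix (Fin m) (Fin m) ℂ),
      E.PosDef → E₀.PosDef →
      -((Bᴴ * E⁻¹ * B).trace.re) ≤
        (E₀⁻¹ * B₀ * B₀ᴴ * E₀⁻¹ * E).trace.re - 2 * (B₀ᴴ * E₀⁻¹ * B).trace.re
          + (B₀ᴴ * E₀⁻¹ * B₀).trace.re - (E₀⁻¹ * B₀ * B₀ᴴ).trace.re) := by
  constructor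
  · intro B₁ B₂ E₁ E₂ hE₁ hE₂ t ht0 ht1
    set Bb := (t : ℂ) • B₁ + ((1 - t : ℝ) : ℂ) • B₂ with hBb
    set Eb := (t : ℂ) • E₁ + ((1 - t : ℝ) : ℂ) • E₂ with hEb
    have hEbPD : Eb.PosDef := myConvexPD hE₁ hE₂ ht0 ht1
    have hdet : IsUnit Eb.det := hEbPD.det_pos.ne'.isUnit
    have k1 := myKey B₁ Bb E₁ Eb hE₁ hEbPD
    have k2 := myKey B₂ Bb E₂ Eb hE₂ hEbPD
    -- combine
    have hM : (Eb⁻¹ * Bb * Bbᴴ * Eb⁻¹ * Eb).trace.re =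
        t * (Eb⁻¹ * Bb * Bbᴴ * Eb⁻¹ * E₁).trace.re
          + (1 - t) * (Eb⁻¹ * Bb * Bbᴴ * Eb⁻¹ * E₂).trace.re := by
      conv_lhs => rw [hEb]
      rw [Matrix.mul_add, Matrix.mul_smul, Matrix.mul_smul,
        Matrix.trace_add, Matrix.trace_smul, Matrix.trace_smul]
      simp only [Complex.add_re, smul_eq_mul, Complex.re_ofReal_mul]
      rfl
    have hN : (Bbᴴ * Eb⁻¹ * Bb).trace.re =
        t * (Bbᴴ * Eb⁻¹ * B₁).trace.re + (1 - t) * (Bbᴴ * Eb⁻¹ * B₂).trace.re := by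
      conv_lhs => rw [show (Bbᴴ * Eb⁻¹ * Bb) = Bbᴴ * Eb⁻¹ * ((t : ℂ) • B₁ + ((1 - t : ℝ) : ℂ) • B₂) from by rw [← hBb]]
      rw [Matrix.mul_add, Matrix.mul_smul, Matrix.mul_smul,
        Matrix.trace_add, Matrix.trace_smul, Matrix.trace_smul]
      simp only [Complex.add_re, smul_eq_mul, Complex.re_ofReal_mul]
    have hEE : (Eb⁻¹ * Bb * Bbᴴ * Eb⁻¹ * Eb).trace = (Bbᴴ * Eb⁻¹ * Bb).trace := by
      rw [Matrix.nonsing_inv_mul_cancel_right _ _ hdet, Matrix.trace_mul_comm,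
        ← Matrix.mul_assoc]
    have h1 : t * (-(B₁ᴴ * E₁⁻¹ * B₁).trace.re) ≤
        t * ((Eb⁻¹ * Bb * Bbᴴ * Eb⁻¹ * E₁).trace.re - 2 * (Bbᴴ * Eb⁻¹ * B₁).trace.re) :=
      mul_le_mul_of_nonneg_left k1 ht0
    have h2 : (1 - t) * (-(B₂ᴴ * E₂⁻¹ * B₂).trace.re) ≤
        (1 - t) * ((Eb⁻¹ * Bb * Bbᴴ * Eb⁻¹ * E₂).trace.re - 2 * (Bbᴴ * Eb⁻¹ * B₂).trace.re) :=
      mul_le_mul_of_nonneg_left k2 (by linarith)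
    have hre : (Eb⁻¹ * Bb * Bbᴴ * Eb⁻¹ * Eb).trace.re = (Bbᴴ * Eb⁻¹ * Bb).trace.re := by
      rw [hEE]
    nlinarith [h1, h2, hM, hN, hre]
  · intro B B₀ E E₀ hE hE₀
    have key := myKey B B₀ E E₀ hE hE₀
    have hc : (B₀ᴴ * E₀⁻¹ * B₀).trace = (E₀⁻¹ * B₀ * B₀ᴴ).trace := by
      rw [Matrix.trace_mul_comm (E₀⁻¹ * B₀) B₀ᴴ, ← Matrix.mul_assoc]
    have : (B₀ᴴ * E₀⁻¹ * B₀).trace.re = (E₀⁻¹ * B₀ * B₀ᴴ).trace.re := by rw [hc]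
    linarith
end
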